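/- Lower bound on the number of primary edge subsets: for a sink node t and nonnegative integer β_t ≤ C_t − ω, every β_t-element subset of the input edges In(t) of t is a size-β_t primary edge subset for t; hence |A_t(β_t)| ≥ C(|In(t)|, β_t). -/

import Mathlib

open Finset Matrix

/-- `l` is a nonempty directed trail: consecutive edges are adjacent. -/
def IsTrail {V E : Type*} (tail head : E → V) (l : List E) : Prop :=
  l ≠ [] ∧ l.Chain' (fun a b => head a = tail b)

/-- A directed path from the edge `e` to the node `t`. -/
def EPath {V E : Type*} (tail head : E → V) (e : E) (t : V) (l : List E) : Prop :=
  IsTrail tail head l ∧ l.head? = some e ∧ ∃ f, l.getLast? = some f ∧ head f = t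

/-- A directed path from the node `s` to the node `t`. -/
def NPath {V E : Type*} (tail head : E → V) (s t : V) (l : List E) : Prop :=
  IsTrail tail head l ∧ (∃ f, l.head? = some f ∧ tail f = s) ∧
    ∃ g, l.getLast? = some g ∧ head g = t

/-- `A` is a cut separating the node `t` from the edge subset `ξ`: every directed path
from an edge of `ξ` to `t` meets `A`. -/
def SeparatesF {V E : Type*} (tail head : E → V) (ξ : Finset E) (t : V) (A : Finset E) : Prop :=
  ∀ e ∈ ξ, ∀ l : List E, EPath tail head e t l → ∃ a ∈ A, a ∈ l

/-- `A` is a cut separating the node `t` from the node `s`. -/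
def SeparatesN {V E : Type*} (tail head : E → V) (s t : V) (A : Finset E) : Prop :=
  ∀ l : List E, NPath tail head s t l → ∃ a ∈ A, a ∈ l

/-- Minimum cut capacity separating `t` from the edge subset `ξ`. -/
noncomputable def mincutE {V E : Type*} (tail head : E → V) (ξ : Finset E) (t : V) : ℕ :=
  sInf {n | ∃ A : Finset E, SeparatesF tail head ξ t A ∧ A.card = n}

/-- Minimum cut capacity separating `t` from the node `s`. -/
noncomputable def mincutN {V E : Type*} (tail head : E → V) (s t : V) : ℕ :=
  sInf {n | ∃ A : Finset E, SeparatesN tail head s t A ∧ A.card = n}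

/-- `A` is a minimum cut separating `t` from `ξ`. -/
def IsMinCut {V E : Type*} (tail head : E → V) (ξ : Finset E) (t : V) (A : Finset E) : Prop :=
  SeparatesF tail head ξ t A ∧ A.card = mincutE tail head ξ t

/-- `A` is the primary minimum cut separating `t` from `ξ`: a minimum cut that separates
`t` from every minimum cut separating `t` from `ξ`. -/
def IsPrimaryMinCut {V E : Type*} (tail head : E → V) (ξ : Finset E) (t : V) (A : Finset E) :
    Prop :=
  IsMinCut tail head ξ t A ∧ ∀ B : Finset E, IsMinCut tail head ξ t B → SeparatesF tail head B t A

/-- `η` is primary for `t`: `η` is the primary minimum cut separating `t` from `η` itself. -/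
def PrimaryFor {V E : Type*} (tail head : E → V) (η : Finset E) (t : V) : Prop :=
  IsPrimaryMinCut tail head η t η

/-- The directed graph is acyclic: there is a topological order on the edges. -/
def Acyclic {V E : Type*} (tail head : E → V) : Prop :=
  ∃ f : E → ℕ, ∀ d e, head d = tail e → f d < f e

/-- Lower bound on the number of primary edge subsets: if the sink `t` has no output
edges, then every `β_t`-element subset of the input edges `In(t)` of `t` is a size-`β_t`
primary edge subset for `t`; hence `|A_t(β_t)| ≥ C(|In(t)|, β_t)`. -/
theorem stmt16 {V E : Type*} [Fintype E] [DecidableEq E] [DecidableEq V]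
    (tail head : E → V) (s t : V) (ω β : ℕ)
    (htout : ∀ e, tail e ≠ t)
    (hβ : β ≤ mincutN tail head s t - ω) :
    (∀ ρ : Finset E, ρ ⊆ Finset.univ.filter (fun e => head e = t) → ρ.card = β →
        PrimaryFor tail head ρ t) ∧
      ((Finset.univ.filter (fun e => head e = t)).card.choose β ≤
        {ρ : Finset E | ρ.card = β ∧ PrimaryFor tail head ρ t}.ncard) := by
  have main : ∀ ρ : Finset E, ρ ⊆ Finset.univ.filter (fun e => head e = t) → ρ.card = β →
      PrimaryFor tail head ρ t := by
    intro ρ hρ _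
    have hmem : ∀ e ∈ ρ, head e = t := fun e he => (Finset.mem_filter.mp (hρ he)).2
    have hpath : ∀ e ∈ ρ, EPath tail head e t [e] := by
      intro e he
      exact ⟨⟨by simp, List.isChain_singleton _⟩, by simp, e, by simp, hmem e he⟩
    have hsep : SeparatesF tail head ρ t ρ := by
      intro e he l hl
      exact ⟨e, he, List.mem_of_mem_head? hl.2.1⟩
    have hsub : ∀ A : Finset E, SeparatesF tail head ρ t A → ρ ⊆ A := by
      intro A hA e he
      obtain ⟨a, ha, hal⟩ := hA e he [e] (hpath e he)
      simp only [List.mem_singleton] at hal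
      subst hal; exact ha
    have hmincut : mincutE tail head ρ t = ρ.card := by
      apply le_antisymm
      · exact Nat.sInf_le ⟨ρ, hsep, rfl⟩
      · refine le_csInf ⟨ρ.card, ρ, hsep, rfl⟩ ?_
        rintro n ⟨A, hA, rfl⟩
        exact Finset.card_le_card (hsub A hA)
    have hmin : IsMinCut tail head ρ t ρ := by
      unfold IsMinCut; exact ⟨hsep, hmincut.symm⟩
    unfold PrimaryFor IsPrimaryMinCut
    refine ⟨hmin, ?_⟩
    intro B hB
    obtain ⟨hBsep, hBcard⟩ := hB
    have hBρ : ρ = B :=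
      Finset.eq_of_subset_of_card_le (hsub B hBsep) (by rw [hBcard, hmincut])
    rw [← hBρ]
    exact hsep
  refine ⟨main, ?_⟩
  have hsubset : (↑((Finset.univ.filter (fun e => head e = t)).powersetCard β) :
      Set (Finset E)) ⊆ {ρ : Finset E | ρ.card = β ∧ PrimaryFor tail head ρ t} := by
    intro ρ hρ
    simp only [Finset.coe_sort_coe, Finset.mem_coe, Finset.mem_powersetCard] at hρ
    exact ⟨hρ.2, main ρ hρ.1 hρ.2⟩
  calc (Finset.univ.filter (fun e => head e = t)).card.choose β
      = ((Finset.univ.filter (fun e => head e = t)).powersetCard β).card := by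
        rw [Finset.card_powersetCard]
    _ = (↑((Finset.univ.filter (fun e => head e = t)).powersetCard β) :
          Set (Finset E)).ncard := (Set.ncard_coe_finset _).symm
    _ ≤ _ := Set.ncard_le_ncard hsubset (Set.toFinite _)
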